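/- Let B be an affine set in general position on S², g ≠ id a symmetry of B, and H a closed hemisphere with g(B ∩ H) = B ∩ H. Then B ⊆ H or B ⊆ −H. -/

import Mathlib

set_option maxHeartbeats 1000000

open scoped RealInnerProductSpace

noncomputable section

abbrev E3 := EuclideanSpace ℝ (Fin 3)

/-- Determinant of the 3×3 matrix whose rows are `p`, `q`, `r`. -/
def det3 (p q r : E3) : ℝ := Matrix.det (Matrix.of ![fun i => p i, fun i => q i, fun i => r i])

/-- The orientation `sgn(p,q,r)` of a triple of points: the sign of `det3 p q r`. -/
def sgn3 (p q r : E3) : ℝ := Real.sign (det3 p q r)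

/-- An affine set: a finite subset of the unit sphere contained in an open hemisphere. -/
def IsAffineSet (A : Set E3) : Prop :=
  A.Finite ∧ A ⊆ Metric.sphere (0 : E3) 1 ∧ ∃ v : E3, ∀ p ∈ A, 0 < ⟪v, p⟫

/-- General position for an affine set: no three of its points are coplanar with the origin. -/
def GenPos (A : Set E3) : Prop :=
  ∀ p ∈ A, ∀ q ∈ A, ∀ r ∈ A, p ≠ q → p ≠ r → q ≠ r → det3 p q r ≠ 0

/-- `p` is extreme in `A`: some great circle strictly separates `p` from `A \ {p}`. -/
def IsExtremePt (p : E3) (A : Set E3) : Prop :=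
  ∃ v : E3, 0 < ⟪v, p⟫ ∧ ∀ q ∈ A, q ≠ p → ⟪v, q⟫ < 0

/-- `f` preserves orientations on `S`. -/
def OrientationPreservingOn (f : E3 → E3) (S : Set E3) : Prop :=
  ∀ p ∈ S, ∀ q ∈ S, ∀ r ∈ S, sgn3 (f p) (f q) (f r) = sgn3 p q r

lemma inner3 (x y : E3) : ⟪x, y⟫ = x 0 * y 0 + x 1 * y 1 + x 2 * y 2 := by
  simp [PiLp.inner_apply, RCLike.inner_apply, Fin.sum_univ_three, mul_comm]
lemma det3_expand (p q r : E3) :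
    det3 p q r = p 0 * (q 1 * r 2 - q 2 * r 1) - p 1 * (q 0 * r 2 - q 2 * r 0)
      + p 2 * (q 0 * r 1 - q 1 * r 0) := by
  simp [det3, Matrix.det_fin_three, Matrix.of_apply]; ring
def cross3 (x y : E3) : E3 :=
  WithLp.toLp 2 ![x 1 * y 2 - x 2 * y 1, x 2 * y 0 - x 0 * y 2, x 0 * y 1 - x 1 * y 0]
lemma cross3_0 (x y : E3) : cross3 x y 0 = x 1 * y 2 - x 2 * y 1 := rfl
lemma cross3_1 (x y : E3) : cross3 x y 1 = x 2 * y 0 - x 0 * y 2 := rfl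
lemma cross3_2 (x y : E3) : cross3 x y 2 = x 0 * y 1 - x 1 * y 0 := rfl
lemma sa (a : ℝ) (x : E3) (i : Fin 3) : (a • x) i = a * x i := rfl
lemma aa (x y : E3) (i : Fin 3) : (x + y) i = x i + y i := rfl
lemma z3 (i : Fin 3) : (0 : E3) i = 0 := rfl
lemma det3_cyc (p q r : E3) : det3 p q r = det3 q r p := by simp only [det3_expand]; ring
lemma det3_swap23 (p q r : E3) : det3 p q r = - det3 p r q := by simp only [det3_expand]; ring
lemma det3_rep13 (p q : E3) : det3 p q p = 0 := by simp only [det3_expand]; ring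
lemma det3_rep23 (p q : E3) : det3 p q q = 0 := by simp only [det3_expand]; ring
lemma det3_rep12 (p q : E3) : det3 p p q = 0 := by simp only [det3_expand]; ring
lemma det3_comb1 (a b : ℝ) (x y q r : E3) :
    det3 (a • x + b • y) q r = a * det3 x q r + b * det3 y q r := by
  simp only [det3_expand, sa, aa]; ring
lemma det3_comb2 (a b : ℝ) (x y p r : E3) :
    det3 p (a • x + b • y) r = a * det3 p x r + b * det3 p y r := by
  simp only [det3_expand, sa, aa]; ring
lemma det3_comb3 (a b : ℝ) (x y p q : E3) :
    det3 p q (a • x + b • y) = a * det3 p q x + b * det3 p q y := by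
  simp only [det3_expand, sa, aa]; ring
lemma I1 (w z x y m : E3) :
    ⟪w, z⟫ * det3 m x y + ⟪w, x⟫ * det3 m y z + ⟪w, y⟫ * det3 m z x
      = det3 z x y * ⟪w, m⟫ := by
  simp only [det3_expand, inner3]; ring
lemma lagrange (w u x y : E3) :
    ⟪cross3 w u, cross3 x y⟫ = ⟪w, x⟫ * ⟪u, y⟫ - ⟪w, y⟫ * ⟪u, x⟫ := by
  simp only [inner3, cross3_0, cross3_1, cross3_2]; ring
lemma cross_dot (p q r : E3) : ⟪cross3 p q, r⟫ = det3 p q r := by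
  simp only [inner3, det3_expand, cross3_0, cross3_1, cross3_2]; ring
lemma Jid (v y m₁ m₂ : E3) :
    ⟪v, v⟫ * ⟪y, cross3 m₁ m₂⟫
      = det3 m₁ m₂ v * ⟪y, v⟫ + ⟪v, m₂⟫ * ⟪y, cross3 m₁ v⟫
        - ⟪v, m₁⟫ * ⟪y, cross3 m₂ v⟫ := by
  simp only [inner3, det3_expand, cross3_0, cross3_1, cross3_2]; ring
lemma base_dot (v u : E3) :
    ⟪cross3 (cross3 v u) u, v⟫ = -(⟪u, u⟫ * ⟪v, v⟫ - ⟪u, v⟫ ^ 2) := by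
  simp only [inner3, cross3_0, cross3_1, cross3_2]; ring
lemma Kid (v u x y : E3) :
    ⟪v, x⟫ * ⟪u, y⟫ - ⟪u, x⟫ * ⟪v, y⟫ = ⟪cross3 (cross3 v u) x, y⟫ := by
  simp only [inner3, cross3_0, cross3_1, cross3_2]; ring
lemma Mid (u v c d₁ d₂ : E3) :
    ⟪v, d₂⟫ * (⟪cross3 v u, d₁⟫ * ⟪u, c⟫ - ⟪cross3 v u, c⟫ * ⟪u, d₁⟫)
      - ⟪v, d₁⟫ * (⟪cross3 v u, d₂⟫ * ⟪u, c⟫ - ⟪cross3 v u, c⟫ * ⟪u, d₂⟫)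
      = (⟪u, u⟫ * ⟪v, v⟫ - ⟪u, v⟫ ^ 2) * det3 c d₁ d₂
        + ⟪v, c⟫ * (⟪u, v⟫ * det3 d₁ d₂ u - ⟪u, u⟫ * det3 d₁ d₂ v) := by
  simp only [inner3, det3_expand, cross3_0, cross3_1, cross3_2]; ring

----------------------------------------------------------------
-- derived lemmas
----------------------------------------------------------------

/-- STAR: if `m₁, m₂ ⊥ w` then `det3 m₁ m₂ x * ⟪w,y⟫ = det3 m₁ m₂ y * ⟪w,x⟫`. -/
lemma star_id (w m₁ m₂ x y : E3) (h1 : ⟪w, m₁⟫ = 0) (h2 : ⟪w, m₂⟫ = 0) :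
    det3 m₁ m₂ x * ⟪w, y⟫ = det3 m₁ m₂ y * ⟪w, x⟫ := by
  have h := I1 w m₁ m₂ x y
  rw [h1, h2] at h
  have h' := I1 w m₁ m₂ y x
  rw [h1, h2] at h'
  have e1 : det3 y m₁ m₂ = det3 m₁ m₂ y := by rw [det3_cyc m₁ m₂ y, det3_cyc m₂ y m₁]
  rw [e1] at h
  linear_combination -h

/-- G > 0 under the crossing configuration. -/
lemma G_pos (u v a b : E3) (hua : 0 < ⟪u, a⟫) (hub : 0 < ⟪u, b⟫)
    (hva : 0 < ⟪v, a⟫) (hvb : ⟪v, b⟫ < 0) :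
    0 < ⟪u, u⟫ * ⟪v, v⟫ - ⟪u, v⟫ ^ 2 := by
  have hG : ⟪u, u⟫ * ⟪v, v⟫ - ⟪u, v⟫ ^ 2 = ⟪cross3 v u, cross3 v u⟫ := by
    rw [lagrange]; rw [real_inner_comm u v]; ring
  rcases eq_or_ne (cross3 v u) 0 with hz | hz
  · exfalso
    have hk := Kid v u a b
    rw [hz] at hk
    have hzz : ⟪cross3 (0 : E3) a, b⟫ = 0 := by
      rw [inner3]
      simp only [cross3_0, cross3_1, cross3_2, z3]
      ring
    rw [hzz] at hk
    nlinarith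
  · rw [hG]
    exact lt_of_le_of_ne real_inner_self_nonneg
      (fun h => hz (inner_self_eq_zero.mp h.symm))

/-- B1: the bridging identity between det3-orientation and the t-coordinate. -/
lemma bridge (u v m₁ m₂ : E3) (h1 : ⟪v, m₁⟫ = 0) (h2 : ⟪v, m₂⟫ = 0) :
    (⟪cross3 v u, m₁⟫ * ⟪u, m₂⟫ - ⟪cross3 v u, m₂⟫ * ⟪u, m₁⟫) * ⟪v, v⟫
      = -((⟪u, u⟫ * ⟪v, v⟫ - ⟪u, v⟫ ^ 2) * det3 m₁ m₂ v) := by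
  set n := cross3 v u with hn
  have hl : ⟪cross3 n u, cross3 m₁ m₂⟫ = ⟪n, m₁⟫ * ⟪u, m₂⟫ - ⟪n, m₂⟫ * ⟪u, m₁⟫ :=
    lagrange n u m₁ m₂
  have hj := Jid v (cross3 n u) m₁ m₂
  rw [h1, h2] at hj
  have hb := base_dot v u
  -- hj : ⟪v,v⟫ * ⟪cross3 n u, cross3 m₁ m₂⟫ = det3 m₁ m₂ v * ⟪cross3 n u, v⟫
  rw [hl] at hj
  rw [← hn] at hb
  linear_combination hj + det3 m₁ m₂ v * hb

/-- key comparison (strict). -/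
lemma key_lt (u v m₁ m₂ : E3) (hG : 0 < ⟪u, u⟫ * ⟪v, v⟫ - ⟪u, v⟫ ^ 2)
    (hvv : 0 < ⟪v, v⟫)
    (h1 : ⟪v, m₁⟫ = 0) (h2 : ⟪v, m₂⟫ = 0) (hu1 : 0 < ⟪u, m₁⟫) (hu2 : 0 < ⟪u, m₂⟫)
    (hd : det3 m₁ m₂ v < 0) :
    ⟪cross3 v u, m₂⟫ / ⟪u, m₂⟫ < ⟪cross3 v u, m₁⟫ / ⟪u, m₁⟫ := by
  have hb := bridge u v m₁ m₂ h1 h2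
  rw [div_lt_div_iff₀ hu2 hu1]
  nlinarith [hb, mul_pos hG (neg_pos.mpr hd)]

/-- L-CD : relating det3 c d y (`y ⊥ v`) to det3 m* y v. -/
lemma lcd (v c d y : E3) (hy : ⟪v, y⟫ = 0) (hd : ⟪v, d⟫ < 0) :
    ⟪v, v⟫ * det3 c d y = det3 ((-⟪v, d⟫) • c + ⟪v, c⟫ • d) y v := by
  set m := (-⟪v, d⟫) • c + ⟪v, c⟫ • d with hm
  have hmv : ⟪v, m⟫ = 0 := by
    rw [hm, inner_add_right, real_inner_smul_right, real_inner_smul_right]; ring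
  have hst := star_id v m y d v hmv hy
  -- det3 m y d * ⟪v,v⟫ = det3 m y v * ⟪v,d⟫
  have he : det3 m y d = ⟪v, d⟫ * det3 c d y := by
    rw [hm, det3_comb1, det3_rep13, det3_swap23 c y d]; ring
  have hdne : ⟪v, d⟫ ≠ 0 := ne_of_lt hd
  apply mul_left_cancel₀ hdne
  linear_combination hst - ⟪v, v⟫ * he

/-- Two distinct all-left downward-crossing edges are impossible. -/
lemma edge_unique (v c₁ d₁ c₂ d₂ : E3)
    (hc₁ : 0 ≤ ⟪v, c₁⟫) (hd₁ : ⟪v, d₁⟫ < 0) (hc₂ : 0 ≤ ⟪v, c₂⟫) (hd₂ : ⟪v, d₂⟫ < 0)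
    (h12c : 0 < det3 c₁ d₁ c₂) (h12d : 0 < det3 c₁ d₁ d₂)
    (h21c : 0 < det3 c₂ d₂ c₁) (h21d : 0 < det3 c₂ d₂ d₁) : False := by
  set a₁ : ℝ := -⟪v, d₁⟫ with ha₁
  set b₁ : ℝ := ⟪v, c₁⟫ with hb₁
  set a₂ : ℝ := -⟪v, d₂⟫ with ha₂
  set b₂ : ℝ := ⟪v, c₂⟫ with hb₂
  have ha₁p : 0 < a₁ := by rw [ha₁]; linarith
  have ha₂p : 0 < a₂ := by rw [ha₂]; linarith
  set m₁ : E3 := a₁ • c₁ + b₁ • d₁ with hm₁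
  set m₂ : E3 := a₂ • c₂ + b₂ • d₂ with hm₂
  have hv₁ : ⟪v, m₁⟫ = 0 := by
    rw [hm₁, inner_add_right, real_inner_smul_right, real_inner_smul_right, ha₁, hb₁]; ring
  have hv₂ : ⟪v, m₂⟫ = 0 := by
    rw [hm₂, inner_add_right, real_inner_smul_right, real_inner_smul_right, ha₂, hb₂]; ring
  have hs₁₂ : 0 < det3 c₁ d₁ m₂ := by
    rw [hm₂, det3_comb3]
    have : 0 ≤ b₂ * det3 c₁ d₁ d₂ := mul_nonneg hc₂ (le_of_lt h12d)
    nlinarith [mul_pos ha₂p h12c]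
  have hs₂₁ : 0 < det3 c₂ d₂ m₁ := by
    rw [hm₁, det3_comb3]
    have : 0 ≤ b₁ * det3 c₂ d₂ d₁ := mul_nonneg hc₁ (le_of_lt h21d)
    nlinarith [mul_pos ha₁p h21c]
  have he₁ : det3 m₁ m₂ d₁ = -(a₁ * det3 c₁ d₁ m₂) := by
    rw [hm₁, det3_comb1, det3_swap23 c₁ m₂ d₁, det3_rep13]; ring
  have he₂ : det3 m₁ m₂ d₂ = a₂ * det3 c₂ d₂ m₁ := by
    rw [hm₂, det3_comb2, det3_rep23, det3_cyc m₁ c₂ d₂]; ring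
  have hst := star_id v m₁ m₂ d₁ d₂ hv₁ hv₂
  rw [he₁, he₂] at hst
  -- hst : -(a₁ * s₁₂) * ⟪v,d₂⟫ = a₂ * s₂₁ * ⟪v,d₁⟫
  have hvd₂ : ⟪v, d₂⟫ = -a₂ := by rw [ha₂]; ring
  have hvd₁ : ⟪v, d₁⟫ = -a₁ := by rw [ha₁]; ring
  rw [hvd₁, hvd₂] at hst
  nlinarith [mul_pos ha₁p hs₁₂, mul_pos ha₂p hs₂₁, mul_pos (mul_pos ha₁p ha₂p) hs₁₂,
    mul_pos (mul_pos ha₁p ha₂p) hs₂₁]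

/-- The cycle lemma: a closed cycle strictly on the positive side of `w ⊥ z`,
turning consistently positively around `z`, is impossible. -/
lemma cyc_pos (z w : E3) (L : ℕ) (hL : 1 ≤ L) (q : ℕ → E3) (hq : q L = q 0)
    (hz : ⟪w, z⟫ = 0) (hpos : ∀ i, i ≤ L → 0 < ⟪w, q i⟫)
    (hdet : ∀ i, i < L → 0 < det3 z (q i) (q (i + 1))) : False := by
  have hw0 : 0 < ⟪w, w⟫ := by
    have h0 := hpos 0 (Nat.zero_le L)
    rcases eq_or_ne w 0 with h | h
    · rw [h] at h0; simp at h0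
    · exact lt_of_le_of_ne real_inner_self_nonneg (fun hh => h (inner_self_eq_zero.mp hh.symm))
  set t : ℕ → ℝ := fun i => det3 w z (q i) / ⟪w, q i⟫ with ht
  have hstep : ∀ i, i < L → t (i + 1) < t i := by
    intro i hi
    have hI := I1 w z (q i) (q (i + 1)) w
    rw [hz] at hI
    have hsw : det3 w (q (i + 1)) z = -det3 w z (q (i + 1)) := by
      rw [det3_swap23 w (q (i+1)) z]
    rw [hsw] at hI
    -- hI : 0 * det3 w (q i) (q (i+1)) + ⟪w,q i⟫ * (-det3 w z (q (i+1))) + ⟪w,q (i+1)⟫ * det3 w z (q i) = det3 z (q i) (q (i+1)) * ⟪w,w⟫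
    have hai : 0 < ⟪w, q i⟫ := hpos i (le_of_lt hi)
    have hai1 : 0 < ⟪w, q (i + 1)⟫ := hpos (i + 1) hi
    rw [ht]
    simp only
    rw [div_lt_div_iff₀ hai1 hai]
    nlinarith [mul_pos (hdet i hi) hw0]
  have hchain : ∀ k, k ≤ L → 1 ≤ k → t k < t 0 := by
    intro k
    induction k with
    | zero => intro _ h; omega
    | succ n ih =>
      intro hle _
      rcases Nat.eq_zero_or_pos n with h0 | hpos'
      · subst h0; exact hstep 0 (by omega)
      · exact lt_trans (hstep n (by omega)) (ih (by omega) (by omega))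
  have := hchain L (le_refl L) hL
  rw [ht] at this
  simp only [hq] at this
  exact lt_irrefl _ this

/-- negative-turning variant. -/
lemma cyc_neg (z w : E3) (L : ℕ) (hL : 1 ≤ L) (q : ℕ → E3) (hq : q L = q 0)
    (hz : ⟪w, z⟫ = 0) (hpos : ∀ i, i ≤ L → 0 < ⟪w, q i⟫)
    (hdet : ∀ i, i < L → det3 z (q i) (q (i + 1)) < 0) : False := by
  apply cyc_pos z w L hL (fun i => q (L - i)) (by simp [hq]) hz
  · intro i _; exact hpos (L - i) (by omega)
  · intro i hi
    have h1 : L - i = (L - (i + 1)) + 1 := by omega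
    have h2 : L - (i + 1) < L := by omega
    rw [h1]
    have := hdet (L - (i + 1)) h2
    rw [det3_swap23]
    linarith

/-- Existence of an all-left downward-crossing edge. -/
lemma edge_exists (u v : E3) (S : Finset E3)
    (hu : ∀ x ∈ S, 0 < ⟪u, x⟫)
    (hgp : ∀ p ∈ S, ∀ q ∈ S, ∀ r ∈ S, p ≠ q → p ≠ r → q ≠ r → det3 p q r ≠ 0)
    (a : E3) (haS : a ∈ S) (hva : 0 < ⟪v, a⟫)
    (b : E3) (hbS : b ∈ S) (hvb : ⟪v, b⟫ < 0) :
    ∃ c ∈ S, ∃ d ∈ S, 0 ≤ ⟪v, c⟫ ∧ ⟪v, d⟫ < 0 ∧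
      ∀ x ∈ S, x ≠ c → x ≠ d → 0 < det3 c d x := by
  classical
  have hvv : 0 < ⟪v, v⟫ := by
    rcases eq_or_ne v 0 with h | h
    · rw [h] at hva; simp at hva
    · exact lt_of_le_of_ne real_inner_self_nonneg (fun hh => h (inner_self_eq_zero.mp hh.symm))
  have hG : 0 < ⟪u, u⟫ * ⟪v, v⟫ - ⟪u, v⟫ ^ 2 := G_pos u v a b (hu a haS) (hu b hbS) hva hvb
  set n : E3 := cross3 v u with hn
  set mm : E3 × E3 → E3 := fun pr => (-⟪v, pr.2⟫) • pr.1 + ⟪v, pr.1⟫ • pr.2 with hmm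
  set T : E3 × E3 → ℝ := fun pr => ⟪n, mm pr⟫ / ⟪u, mm pr⟫ with hT
  set Sg : E3 × E3 → ℝ := fun pr =>
      (⟪n, pr.2⟫ * ⟪u, mm pr⟫ - ⟪n, mm pr⟫ * ⟪u, pr.2⟫) / ((-⟪v, pr.2⟫) * ⟪u, mm pr⟫) with hSg
  set P : Finset (E3 × E3) :=
      (S ×ˢ S).filter (fun pr => 0 ≤ ⟪v, pr.1⟫ ∧ ⟪v, pr.2⟫ < 0) with hP
  have hPmem : ∀ pr : E3 × E3, pr ∈ P ↔
      (pr.1 ∈ S ∧ pr.2 ∈ S) ∧ (0 ≤ ⟪v, pr.1⟫ ∧ ⟪v, pr.2⟫ < 0) := by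
    intro pr; rw [hP, Finset.mem_filter, Finset.mem_product]
  have hPne : P.Nonempty := ⟨(a, b), (hPmem (a, b)).mpr ⟨⟨haS, hbS⟩, ⟨le_of_lt hva, hvb⟩⟩⟩
  obtain ⟨pr₀, hpr₀P, hpr₀min⟩ := P.exists_min_image T hPne
  set P₁ : Finset (E3 × E3) := P.filter (fun q => T q ≤ T pr₀) with hP₁
  have hP₁ne : P₁.Nonempty := ⟨pr₀, by rw [hP₁, Finset.mem_filter]; exact ⟨hpr₀P, le_refl _⟩⟩
  obtain ⟨pr, hprP₁, hprmin⟩ := P₁.exists_min_image Sg hP₁ne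
  rw [hP₁, Finset.mem_filter] at hprP₁
  obtain ⟨hprP, hprT⟩ := hprP₁
  obtain ⟨c, d⟩ := pr
  obtain ⟨⟨hcS, hdS⟩, hvc, hvd⟩ := (hPmem (c, d)).mp hprP
  have hTmin : ∀ q ∈ P, T (c, d) ≤ T q := fun q hq => le_trans hprT (hpr₀min q hq)
  have hSmin : ∀ q ∈ P, T q ≤ T (c, d) → Sg (c, d) ≤ Sg q := by
    intro q hq hTq
    exact hprmin q (by rw [hP₁, Finset.mem_filter]; exact ⟨hq, le_trans hTq hprT⟩)
  -- generic facts about mm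
  have hmv : ∀ c' d' : E3, ⟪v, mm (c', d')⟫ = 0 := by
    intro c' d'
    rw [hmm]
    simp only [inner_add_right, real_inner_smul_right]
    ring
  have hmu : ∀ c' d' : E3, c' ∈ S → d' ∈ S → 0 ≤ ⟪v, c'⟫ → ⟪v, d'⟫ < 0 →
      0 < ⟪u, mm (c', d')⟫ := by
    intro c' d' hc' hd' h1 h2
    rw [hmm]
    simp only [inner_add_right, real_inner_smul_right]
    have := hu c' hc'; have := hu d' hd'
    nlinarith
  refine ⟨c, hcS, d, hdS, hvc, hvd, ?_⟩
  intro x hxS hxc hxd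
  by_contra hcon
  have hcd : c ≠ d := by intro h; rw [h] at hvc; linarith
  have hdetx : det3 c d x < 0 := by
    rcases lt_trichotomy (det3 c d x) 0 with h | h | h
    · exact h
    · exact absurd h (hgp c hcS d hdS x hxS hcd (Ne.symm hxc) (Ne.symm hxd))
    · exact absurd h hcon
  have humst : 0 < ⟪u, mm (c, d)⟫ := hmu c d hcS hdS hvc hvd
  rcases lt_or_ge ⟪v, x⟫ 0 with hxlow | hxup
  · -- x strictly below
    rcases lt_or_eq_of_le hvc with hvcpos | hvc0
    · -- c strictly above : T decreases for (c,x)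
      have hq' : (c, x) ∈ P := (hPmem (c, x)).mpr ⟨⟨hcS, hxS⟩, ⟨hvc, hxlow⟩⟩
      have hum' : 0 < ⟪u, mm (c, x)⟫ := hmu c x hcS hxS hvc hxlow
      have hmmcx : mm (c, x) = (-⟪v, x⟫) • c + ⟪v, c⟫ • x := by rw [hmm]
      have hdm' : det3 c d (mm (c, x)) < 0 := by
        rw [hmmcx, det3_comb3, det3_rep13]
        nlinarith [mul_pos hvcpos (neg_pos.mpr hdetx)]
      have hlcd := lcd v c d (mm (c, x)) (hmv c x) hvd
      have hdet' : det3 (mm (c, d)) (mm (c, x)) v < 0 := by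
        have : mm (c, d) = (-⟪v, d⟫) • c + ⟪v, c⟫ • d := by rw [hmm]
        rw [this]
        nlinarith [hlcd, mul_pos hvv (neg_pos.mpr hdm')]
      have hkey := key_lt u v (mm (c, d)) (mm (c, x)) hG hvv (hmv c d) (hmv c x)
        humst hum' hdet'
      have := hTmin (c, x) hq'
      rw [hT] at this
      simp only at this
      rw [← hn] at hkey
      linarith
    · -- c on the line : T ties, Sg decreases
      have hvc0' : ⟪v, c⟫ = 0 := hvc0.symm
      have hq' : (c, x) ∈ P := (hPmem (c, x)).mpr ⟨⟨hcS, hxS⟩, ⟨hvc, hxlow⟩⟩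
      have hucpos : 0 < ⟪u, c⟫ := hu c hcS
      -- mm (c,y) = (−⟪v,y⟫) • c when ⟪v,c⟫ = 0
      have hmeq : ∀ y : E3, mm (c, y) = (-⟪v, y⟫) • c + (0 : ℝ) • y := by
        intro y; rw [hmm]; simp only [hvc0']
      have hTeq : ∀ y : E3, ⟪v, y⟫ < 0 → T (c, y) = ⟪n, c⟫ / ⟪u, c⟫ := by
        intro y hy
        rw [hT]
        simp only [hmeq y]
        rw [inner_add_right, inner_add_right, real_inner_smul_right, real_inner_smul_right,
          real_inner_smul_right, real_inner_smul_right]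
        rw [zero_mul, add_zero, zero_mul, add_zero]
        exact mul_div_mul_left _ _ (ne_of_gt (neg_pos.mpr hy))
      have hSgeq : ∀ y : E3, ⟪v, y⟫ < 0 →
          Sg (c, y) = (⟪n, y⟫ * ⟪u, c⟫ - ⟪n, c⟫ * ⟪u, y⟫) / ((-⟪v, y⟫) * ⟪u, c⟫) := by
        intro y hy
        rw [hSg]
        simp only [hmeq y]
        rw [inner_add_right, inner_add_right, real_inner_smul_right, real_inner_smul_right,
          real_inner_smul_right, real_inner_smul_right]
        rw [zero_mul, add_zero, zero_mul, add_zero]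
        have hne : (-⟪v, y⟫) ≠ 0 := ne_of_gt (neg_pos.mpr hy)
        rw [show ⟪n, y⟫ * (-⟪v, y⟫ * ⟪u, c⟫) - -⟪v, y⟫ * ⟪n, c⟫ * ⟪u, y⟫
            = (-⟪v, y⟫) * (⟪n, y⟫ * ⟪u, c⟫ - ⟪n, c⟫ * ⟪u, y⟫) by ring]
        rw [show -⟪v, y⟫ * (-⟪v, y⟫ * ⟪u, c⟫) = (-⟪v, y⟫) * ((-⟪v, y⟫) * ⟪u, c⟫) by ring]
        exact mul_div_mul_left _ _ hne
      have hTq : T (c, x) ≤ T (c, d) := by rw [hTeq x hxlow, hTeq d hvd]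
      have hSle := hSmin (c, x) hq' hTq
      -- now show Sg (c,x) < Sg (c,d)
      have hMid := Mid u v c d x
      rw [← hn] at hMid
      have hnum : ⟪v, x⟫ * (⟪n, d⟫ * ⟪u, c⟫ - ⟪n, c⟫ * ⟪u, d⟫)
          - ⟪v, d⟫ * (⟪n, x⟫ * ⟪u, c⟫ - ⟪n, c⟫ * ⟪u, x⟫)
          = (⟪u, u⟫ * ⟪v, v⟫ - ⟪u, v⟫ ^ 2) * det3 c d x := by
        rw [hMid, hvc0']; ring
      have hlt : Sg (c, x) < Sg (c, d) := by
        rw [hSgeq x hxlow, hSgeq d hvd]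
        rw [div_lt_div_iff₀ (mul_pos (neg_pos.mpr hxlow) hucpos)
          (mul_pos (neg_pos.mpr hvd) hucpos)]
        nlinarith [mul_pos hG (neg_pos.mpr hdetx), hnum, hucpos,
          mul_pos hucpos (mul_pos hG (neg_pos.mpr hdetx))]
      linarith
  · -- x weakly above : pair (x, d)
    have hq' : (x, d) ∈ P := (hPmem (x, d)).mpr ⟨⟨hxS, hdS⟩, ⟨hxup, hvd⟩⟩
    have hum' : 0 < ⟪u, mm (x, d)⟫ := hmu x d hxS hdS hxup hvd
    have hmmxd : mm (x, d) = (-⟪v, d⟫) • x + ⟪v, x⟫ • d := by rw [hmm]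
    have hdm' : det3 c d (mm (x, d)) < 0 := by
      rw [hmmxd, det3_comb3, det3_rep23]
      nlinarith [mul_pos (neg_pos.mpr hvd) (neg_pos.mpr hdetx)]
    have hlcd := lcd v c d (mm (x, d)) (hmv x d) hvd
    have hdet' : det3 (mm (c, d)) (mm (x, d)) v < 0 := by
      have : mm (c, d) = (-⟪v, d⟫) • c + ⟪v, c⟫ • d := by rw [hmm]
      rw [this]
      nlinarith [hlcd, mul_pos hvv (neg_pos.mpr hdm')]
    have hkey := key_lt u v (mm (c, d)) (mm (x, d)) hG hvv (hmv c d) (hmv x d)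
      humst hum' hdet'
    have := hTmin (x, d) hq'
    rw [hT] at this
    simp only at this
    rw [← hn] at hkey
    linarith

lemma pos_of_sign_eq {x y : ℝ} (h : Real.sign x = Real.sign y) (hy : 0 < y) : 0 < x := by
  rw [Real.sign_of_pos hy] at h
  rcases lt_trichotomy x 0 with hx | hx | hx
  · rw [Real.sign_of_neg hx] at h; norm_num at h
  · rw [hx, Real.sign_zero] at h; norm_num at h
  · exact hx

lemma neg_of_sign_eq {x y : ℝ} (h : Real.sign x = Real.sign y) (hy : y < 0) : x < 0 := by
  rw [Real.sign_of_neg hy] at h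
  rcases lt_trichotomy x 0 with hx | hx | hx
  · exact hx
  · rw [hx, Real.sign_zero] at h; norm_num at h
  · rw [Real.sign_of_pos hx] at h; norm_num at h

/-- The orbit/winding contradiction: a fixed point `z`, with the whole orbit of a moved
point `p₀` strictly on the positive side of the plane `w ⊥ ·` through `z`. -/
lemma orbit_contra (B : Set E3) (hfin : B.Finite) (g : E3 → E3) (hbij : Set.BijOn g B B)
    (hpres : OrientationPreservingOn g B) (hgp : GenPos B)
    (Side : E3 → Prop) (z w p₀ : E3)
    (hzB : z ∈ B) (hzfix : g z = z) (hp₀B : p₀ ∈ B) (hmv : g p₀ ≠ p₀)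
    (hwz : ⟪w, z⟫ = 0) (hSide0 : Side p₀)
    (hSide_inv : ∀ x ∈ B, Side x → Side (g x))
    (hw : ∀ x ∈ B, Side x → 0 < ⟪w, x⟫) : False := by
  classical
  haveI : Finite ↥B := hfin.to_subtype
  have hinj := hbij.injOn
  have hmapsTo := hbij.mapsTo
  -- the permutation
  have hfbij : Function.Bijective (fun x : ↥B => (⟨g x, hmapsTo x.2⟩ : ↥B)) := by
    constructor
    · intro x y hxy
      exact Subtype.ext (hinj x.2 y.2 (congrArg Subtype.val hxy))
    · intro y
      obtain ⟨x, hxB, hx⟩ := hbij.surjOn y.2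
      exact ⟨⟨x, hxB⟩, Subtype.ext hx⟩
  set e : Equiv.Perm ↥B := Equiv.ofBijective _ hfbij with he
  have happ : ∀ x : ↥B, ((e x : ↥B) : E3) = g x := fun x => rfl
  have hiter : ∀ (k : ℕ) (x : ↥B), ((e ^ k) x : E3) = g^[k] (x : E3) := by
    intro k
    induction k with
    | zero => intro x; simp
    | succ m ih =>
      intro x
      rw [pow_succ, Equiv.Perm.mul_apply, Function.iterate_succ_apply]
      rw [ih (e x), happ x]
  set N := orderOf e with hN
  have hNpos : 0 < N := orderOf_pos e
  set q : ℕ → E3 := fun i => g^[i] p₀ with hq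
  have hqN : q N = q 0 := by
    rw [hq]
    simp only
    have := hiter N ⟨p₀, hp₀B⟩
    rw [hN] at this ⊢
    rw [← this, pow_orderOf_eq_one e]
    simp
  have hqsucc : ∀ i, q (i + 1) = g (q i) := by
    intro i
    show g^[i + 1] p₀ = g (g^[i] p₀)
    exact Function.iterate_succ_apply' g i p₀
  have hq0 : q 0 = p₀ := rfl
  have hqB : ∀ i, q i ∈ B := by
    intro i
    induction i with
    | zero => rw [hq0]; exact hp₀B
    | succ m ih => rw [hqsucc m]; exact hmapsTo ih
  have hqSide : ∀ i, Side (q i) := by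
    intro i
    induction i with
    | zero => rw [hq0]; exact hSide0
    | succ m ih =>
      rw [hqsucc m]
      exact hSide_inv _ (hqB m) ih
  have hqmv : ∀ i, g (q i) ≠ q i := by
    intro i
    induction i with
    | zero => rw [hq0]; exact hmv
    | succ m ih =>
      rw [hqsucc m]
      intro hcontra
      exact ih (hinj (hmapsTo (hqB m)) (hqB m) hcontra)
  have hzne : ∀ i, z ≠ q i := by
    intro i h
    exact hqmv i (by rw [← h, hzfix, h])
  have hqne : ∀ i, q i ≠ q (i + 1) := by
    intro i h
    exact hqmv i (by rw [← hqsucc i, ← h])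
  -- sign constancy
  have hsgn : ∀ i, sgn3 z (q i) (q (i + 1)) = sgn3 z (q 0) (q 1) := by
    intro i
    induction i with
    | zero => rfl
    | succ m ih =>
      have hp := hpres z hzB (q m) (hqB m) (g (q m)) (hmapsTo (hqB m))
      rw [hzfix] at hp
      rw [← ih, hqsucc (m + 1), hqsucc m]
      exact hp
  have hD0 : det3 z (q 0) (q 1) ≠ 0 := by
    apply hgp z hzB (q 0) (hqB 0) (q 1) (hqB 1) (hzne 0) (hzne 1) (hqne 0)
  have hwq : ∀ i, i ≤ N → 0 < ⟪w, q i⟫ := fun i _ => hw (q i) (hqB i) (hqSide i)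
  rcases lt_or_gt_of_ne hD0 with hneg | hpos
  · apply cyc_neg z w N hNpos q hqN hwz hwq
    intro i _
    exact neg_of_sign_eq (hsgn i) hneg
  · apply cyc_pos z w N hNpos q hqN hwz hwq
    intro i _
    exact pos_of_sign_eq (hsgn i) hpos


/-- Let `B` be an affine set in general position, `g ≠ id` a symmetry of
`B`, and `H = {x | 0 ≤ ⟪v, x⟫}` a closed hemisphere with `g (B ∩ H) = B ∩ H`. Then
`B ⊆ H` or `B ⊆ −H`. -/
theorem stmt11 (B : Set E3) (hB : IsAffineSet B) (hgp : GenPos B)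
    (g : E3 → E3) (hbij : Set.BijOn g B B) (hpres : OrientationPreservingOn g B)
    (hne : ∃ p ∈ B, g p ≠ p)
    (v : E3) (hv : v ≠ 0)
    (hstab : g '' (B ∩ {x : E3 | 0 ≤ ⟪v, x⟫}) = B ∩ {x : E3 | 0 ≤ ⟪v, x⟫}) :
    (∀ p ∈ B, 0 ≤ ⟪v, p⟫) ∨ (∀ p ∈ B, ⟪v, p⟫ ≤ (0 : ℝ)) := by
  classical
  obtain ⟨hfin, hsph, u, hu⟩ := hB
  by_contra hcon
  push_neg at hcon
  obtain ⟨⟨pa, hpaB, hpa⟩, pb, hpbB, hpb⟩ := hcon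
  -- hpa : ⟪v, pa⟫ < 0, hpb : 0 < ⟪v, pb⟫
  set S : Finset E3 := hfin.toFinset with hS
  have hmemS : ∀ x : E3, x ∈ S ↔ x ∈ B := fun x => hfin.mem_toFinset
  have hu' : ∀ x ∈ S, 0 < ⟪u, x⟫ := fun x hx => hu x ((hmemS x).mp hx)
  have hgpS : ∀ p ∈ S, ∀ q ∈ S, ∀ r ∈ S, p ≠ q → p ≠ r → q ≠ r → det3 p q r ≠ 0 :=
    fun p hp q hq r hr => hgp p ((hmemS p).mp hp) q ((hmemS q).mp hq) r ((hmemS r).mp hr)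
  obtain ⟨c, hcS, d, hdS, hvc, hvd, hleft⟩ :=
    edge_exists u v S hu' hgpS pb ((hmemS pb).mpr hpbB) hpb pa ((hmemS pa).mpr hpaB) hpa
  have hcB : c ∈ B := (hmemS c).mp hcS
  have hdB : d ∈ B := (hmemS d).mp hdS
  have hleftB : ∀ x ∈ B, x ≠ c → x ≠ d → 0 < det3 c d x :=
    fun x hx => hleft x ((hmemS x).mpr hx)
  -- the two closed sides are preserved
  have hposmap : ∀ x ∈ B, 0 ≤ ⟪v, x⟫ → 0 ≤ ⟪v, g x⟫ := by
    intro x hx h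
    have hgx : g x ∈ B ∩ {y : E3 | 0 ≤ ⟪v, y⟫} := by
      rw [← hstab]; exact ⟨x, ⟨hx, h⟩, rfl⟩
    exact hgx.2
  have hnegmap : ∀ x ∈ B, ⟪v, x⟫ < 0 → ⟪v, g x⟫ < 0 := by
    intro x hx h
    by_contra h'
    push_neg at h'
    have hgx : g x ∈ B ∩ {y : E3 | 0 ≤ ⟪v, y⟫} := ⟨hbij.mapsTo hx, h'⟩
    rw [← hstab] at hgx
    obtain ⟨y, ⟨hyB, hy0⟩, hyx⟩ := hgx
    rw [hbij.injOn hyB hx hyx] at hy0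
    simp only [Set.mem_setOf_eq] at hy0
    linarith
  -- transfer of strict positivity of det3 along g
  have htrans : ∀ p ∈ B, ∀ q ∈ B, ∀ r ∈ B,
      0 < det3 p q r → 0 < det3 (g p) (g q) (g r) := by
    intro p hp q hq r hr h
    have hs := hpres p hp q hq r hr
    unfold sgn3 at hs
    exact pos_of_sign_eq hs h
  have hgcB : g c ∈ B := hbij.mapsTo hcB
  have hgdB : g d ∈ B := hbij.mapsTo hdB
  have hvgc : 0 ≤ ⟪v, g c⟫ := hposmap c hcB hvc
  have hvgd : ⟪v, g d⟫ < 0 := hnegmap d hdB hvd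
  have hleft' : ∀ x ∈ B, x ≠ g c → x ≠ g d → 0 < det3 (g c) (g d) x := by
    intro x hxB hx1 hx2
    obtain ⟨y, hyB, hyx⟩ := hbij.surjOn hxB
    have hyc : y ≠ c := fun h => hx1 (by rw [← hyx, h])
    have hyd : y ≠ d := fun h => hx2 (by rw [← hyx, h])
    have := htrans c hcB d hdB y hyB (hleftB y hyB hyc hyd)
    rwa [hyx] at this
  -- the unique crossing edge is fixed pointwise by g
  have hcd : c ≠ d := fun h => by rw [h] at hvc; linarith
  have hcgd : c ≠ g d := fun h => by rw [← h] at hvgd; linarith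
  have hgcd : g c ≠ d := fun h => by rw [h] at hvgc; linarith
  have hfix : g c = c ∧ g d = d := by
    by_cases h1 : g c = c
    · refine ⟨h1, ?_⟩
      by_contra h2
      have e1 : 0 < det3 c d (g d) := hleftB (g d) hgdB (Ne.symm hcgd) h2
      have e2 : 0 < det3 (g c) (g d) d := hleft' d hdB
        (by rw [h1]; exact Ne.symm hcd) (Ne.symm h2)
      rw [h1] at e2
      have e3 : det3 c (g d) d = -det3 c d (g d) := by
        simp only [det3_expand]; ring
      linarith
    · exfalso
      by_cases h2 : g d = d
      · have e1 : 0 < det3 c d (g c) := hleftB (g c) hgcB h1 hgcd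
        have e2 : 0 < det3 (g c) (g d) c := hleft' c hcB (Ne.symm h1)
          (by rw [h2]; exact hcd)
        rw [h2] at e2
        have e3 : det3 (g c) d c = -det3 c d (g c) := by
          simp only [det3_expand]; ring
        linarith
      · exact edge_unique v c d (g c) (g d) hvc hvd hvgc hvgd
          (hleftB (g c) hgcB h1 hgcd)
          (hleftB (g d) hgdB (Ne.symm hcgd) h2)
          (hleft' c hcB (Ne.symm h1) hcgd)
          (hleft' d hdB (Ne.symm hgcd) (Ne.symm h2))
  obtain ⟨hgcfix, hgdfix⟩ := hfix
  obtain ⟨p₀, hp₀B, hp₀mv⟩ := hne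
  rcases le_or_gt 0 ⟪v, p₀⟫ with hside | hside
  · -- orbit on the closed positive side; use the fixed point d below it
    refine orbit_contra B hfin g hbij hpres hgp (fun x => 0 ≤ ⟪v, x⟫) d
      (⟪u, d⟫ • v + (-⟪v, d⟫) • u) p₀ hdB hgdfix hp₀B hp₀mv ?_ hside hposmap ?_
    · rw [inner_add_left, real_inner_smul_left, real_inner_smul_left]; ring
    · intro x hxB hsx
      rw [inner_add_left, real_inner_smul_left, real_inner_smul_left]
      nlinarith [hu x hxB, hu d hdB]
  · -- orbit strictly below; use the fixed point c above
    refine orbit_contra B hfin g hbij hpres hgp (fun x => ⟪v, x⟫ < 0) c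
      (⟪v, c⟫ • u + (-⟪u, c⟫) • v) p₀ hcB hgcfix hp₀B hp₀mv ?_ hside hnegmap ?_
    · rw [inner_add_left, real_inner_smul_left, real_inner_smul_left]; ring
    · intro x hxB hsx
      rw [inner_add_left, real_inner_smul_left, real_inner_smul_left]
      nlinarith [hu x hxB, hu c hcB]
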